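/- Let (X, r) be a near-rack solution with r(x,y) = (σ_x(y), τ(x)), and let R : X × X → k^× be a family of nonzero scalars in a field k satisfying R_{i,j} R_{τ(i),k} R_{σ_i(j), σ_{τ(i)}(k)} = R_{j,k} R_{i,σ_j(k)} R_{τ(i),τ(j)} for all i, j, k ∈ X. If r(x, τ(x)) = (x, τ(x)) for some x ∈ X, then R_{x,τ(x)} = R_{τ(x),x}. -/
import Mathlib


def rFst {X : Type*} (r : X × X → X × X) : X × X × X → X × X × X :=
  fun p => ((r (p.1, p.2.1)).1, (r (p.1, p.2.1)).2, p.2.2)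

def rSnd {X : Type*} (r : X × X → X × X) : X × X × X → X × X × X :=
  fun p => (p.1, r (p.2.1, p.2.2))

def IsYB {X : Type*} (r : X × X → X × X) : Prop :=
  rFst r ∘ rSnd r ∘ rFst r = rSnd r ∘ rFst r ∘ rSnd r

/-- `(X, r)` is a near-rack solution of the Yang–Baxter equation with data `σ, τ`. -/
structure IsNearRackSolution {X : Type*} (r : X × X → X × X)
    (σ : X → X → X) (τ : X → X) : Prop where
  hr : ∀ x y : X, r (x, y) = (σ x y, τ x)
  hYB : IsYB r
  hrbij : Function.Bijective r
  hσbij : ∀ x : X, Function.Bijective (σ x)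
  hτbij : Function.Bijective τ
  hτ2 : τ ∘ τ = id
  hτne : τ ≠ id

theorem stmt14 {X : Type*} {k : Type*} [Field k]
    (r : X × X → X × X) (σ : X → X → X) (τ : X → X)
    (h : IsNearRackSolution r σ τ)
    (R : X → X → k) (hR0 : ∀ i j : X, R i j ≠ 0)
    (hR : ∀ i j l : X,
      R i j * R (τ i) l * R (σ i j) (σ (τ i) l)
        = R j l * R i (σ j l) * R (τ i) (τ j))
    (x : X) (hx : r (x, τ x) = (x, τ x)) :
    R x (τ x) = R (τ x) x := by
  have hττ : τ (τ x) = x := congrFun h.hτ2 x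
  have h1 : σ x (τ x) = x := by
    have := (h.hr x (τ x)).symm.trans hx
    exact (Prod.mk.injEq _ _ _ _).mp this |>.1
  have hs : σ (τ x) x = τ x := by
    have hy := congrFun h.hYB (x, τ x, x)
    simp only [Function.comp_apply, rFst, rSnd, h.hr, h1, hττ] at hy
    exact ((Prod.mk.injEq _ _ _ _).mp ((Prod.mk.injEq _ _ _ _).mp hy).2).1.symm
  have key := hR x (τ x) x
  rw [h1, hs, hττ] at key
  exact mul_right_cancel₀ (mul_ne_zero (hR0 x (τ x)) (hR0 (τ x) x))
    (by linear_combination key)
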